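/- Let K ≥ 1, n_t ≥ 1, n_r ≥ 1 be integers with n_r ≥ (K+1)·n_t. Then for every real r with 0 ≤ r ≤ n_t, min over k ∈ {1, …, K} of d*_{k·n_t, n_r}(k·r) equals d*_{n_t, n_r}(r); i.e., when the receiver has at least (K+1)·n_t antennas, single-user performance is achieved for all multiplexing gains, so space-time codes designed for the single-user MIMO channel achieve the outage diversity-multiplexing tradeoff of the MIMO multiple access channel. -/

import Mathlib

/-- The Zheng–Tse diversity-multiplexing tradeoff curve `d*_{m,n}` of an `m × n` MIMO
Rayleigh point-to-point channel: the continuous piecewise-linear function with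
`d*(k) = (m−k)(n−k)` at integers `k` and affine on each interval `[k, k+1]`; explicitly,
for `k = ⌊r⌋`, `d*(r) = (m−k)(n−k) − (r−k)(m+n−2k−1)`. -/
noncomputable def dstar (m n : ℕ) (r : ℝ) : ℝ :=
  ((m : ℝ) - (⌊r⌋ : ℝ)) * ((n : ℝ) - (⌊r⌋ : ℝ)) -
    (r - (⌊r⌋ : ℝ)) * ((m : ℝ) + (n : ℝ) - 2 * (⌊r⌋ : ℝ) - 1)

lemma dstar_eq (m n : ℕ) (x : ℝ) :
    dstar m n x = ((m:ℝ) - x) * ((n:ℝ) - x) + (x - (⌊x⌋:ℝ)) * ((⌊x⌋:ℝ) + 1 - x) := by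
  unfold dstar; ring

lemma arith (kk nt nr r j p : ℝ) (hk2 : 2 ≤ kk) (hnrk : (kk + 1) * nt ≤ nr)
    (_hjle : j ≤ r) (hjlt : r < j + 1) (hjnt : j + 1 ≤ nt)
    (hple : p ≤ kk * r) (hplt : kk * r < p + 1) (_hlt : r < nt)
    (hsmall : (kk ^ 2 - 1) * (nt - r) < 1 → p = kk * nt - 1) :
    (nt - r) * (nr - r) + (r - j) * (j + 1 - r) ≤
      (kk * nt - kk * r) * (nr - kk * r) + (kk * r - p) * (p + 1 - kk * r) := by
  have heps : 0 < nt - r := by linarith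
  have h3 : (kk + 1) * (nt - r) ≤ nr - (kk + 1) * r := by nlinarith
  have h3prod := mul_le_mul_of_nonneg_left h3
    (show 0 ≤ (nt - r) * (kk - 1) by nlinarith)
  have h1 : (r - j) * (j + 1 - r) ≤ j + 1 - r :=
    mul_le_of_le_one_left (by linarith) (by linarith)
  have hsε : (r - j) * (j + 1 - r) ≤ nt - r := by linarith
  by_cases hbig : 1 ≤ (kk ^ 2 - 1) * (nt - r)
  · have h2 : 0 ≤ (kk * r - p) * (p + 1 - kk * r) :=
      mul_nonneg (by linarith) (by linarith)
    have h4 := mul_le_mul_of_nonneg_left hbig heps.le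
    nlinarith [h3prod, h2, hsε, h4]
  · push_neg at hbig
    have hp := hsmall hbig
    subst hp
    have hε1 : nt - r < 1 := by
      nlinarith [mul_nonneg (show (0:ℝ) ≤ kk ^ 2 - 4 by nlinarith) heps.le]
    have hfin : 0 ≤ (nt - r) * (kk - 1 - (nt - r)) :=
      mul_nonneg heps.le (by linarith)
    nlinarith [h3prod, hsε, hfin]

lemma key (K nt nr k : ℕ) (hk1 : 1 ≤ k) (hkK : k ≤ K) (hnt : 1 ≤ nt)
    (hnr : (K + 1) * nt ≤ nr) (r : ℝ) (hr0 : 0 ≤ r) (hr1 : r ≤ (nt : ℝ)) :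
    dstar nt nr r ≤ dstar (k * nt) nr ((k:ℝ) * r) := by
  rcases eq_or_lt_of_le hk1 with h1 | hk2
  · subst h1; simp
  have hk2 : (2:ℝ) ≤ (k:ℝ) := by exact_mod_cast hk2
  have hkK' : (k:ℝ) ≤ (K:ℝ) := by exact_mod_cast hkK
  have hnr' : ((K:ℝ) + 1) * nt ≤ nr := by exact_mod_cast hnr
  have hnt' : (1:ℝ) ≤ (nt:ℝ) := by exact_mod_cast hnt
  rcases eq_or_lt_of_le hr1 with h | hlt
  · subst h
    have h1 : ⌊(nt:ℝ)⌋ = (nt:ℤ) := Int.floor_natCast nt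
    have h2 : ⌊(k:ℝ) * (nt:ℝ)⌋ = ((k * nt : ℕ) : ℤ) := by
      rw [show ((k:ℝ) * (nt:ℝ)) = ((k * nt : ℕ) : ℝ) by push_cast; ring, Int.floor_natCast]
    rw [dstar_eq, dstar_eq, h1, h2]
    push_cast
    nlinarith
  have hjle : (⌊r⌋:ℝ) ≤ r := Int.floor_le r
  have hjlt : r < (⌊r⌋:ℝ) + 1 := Int.lt_floor_add_one r
  have hjnt : (⌊r⌋:ℝ) + 1 ≤ (nt:ℝ) := by
    have : ⌊r⌋ < (nt:ℤ) := Int.floor_lt.mpr (by exact_mod_cast hlt)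
    exact_mod_cast Int.add_one_le_of_lt this
  have hnrk : ((k:ℝ) + 1) * (nt:ℝ) ≤ (nr:ℝ) := by nlinarith
  have hple : (⌊(k:ℝ)*r⌋:ℝ) ≤ (k:ℝ)*r := Int.floor_le _
  have hplt : (k:ℝ)*r < (⌊(k:ℝ)*r⌋:ℝ) + 1 := Int.lt_floor_add_one _
  rw [dstar_eq, dstar_eq]
  push_cast
  apply arith (k:ℝ) (nt:ℝ) (nr:ℝ) r (⌊r⌋:ℝ) (⌊(k:ℝ)*r⌋:ℝ) hk2 hnrk hjle hjlt hjnt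
    hple hplt hlt
  intro hbig
  have heps : (0:ℝ) < (nt:ℝ) - r := by linarith
  have hke : (k:ℝ) * ((nt:ℝ) - r) < 1 := by
    nlinarith [mul_nonneg (show (0:ℝ) ≤ (k:ℝ)^2 - (k:ℝ) - 2 by nlinarith) heps.le]
  have hp : ⌊(k:ℝ) * r⌋ = (k : ℤ) * nt - 1 := by
    rw [Int.floor_eq_iff]
    constructor
    · push_cast; nlinarith
    · push_cast; nlinarith
  rw [hp]; push_cast; ring

/-- If `n_r ≥ (K+1)·n_t`, then for every `0 ≤ r ≤ n_t` the symmetric DMT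
`min_{k=1,…,K} d*_{k·n_t, n_r}(k·r)` of the `K`-user MIMO multiple access channel equals
the single-user tradeoff `d*_{n_t, n_r}(r)`: single-user performance is achieved for all
multiplexing gains. -/
theorem mac_dmt_single_user_for_many_rx (K nt nr : ℕ) (hK : 1 ≤ K) (hnt : 1 ≤ nt)
    (hnr : (K + 1) * nt ≤ nr) (r : ℝ) (hr0 : 0 ≤ r) (hr1 : r ≤ (nt : ℝ)) :
    (Finset.Icc 1 K).inf' (Finset.nonempty_Icc.mpr hK)
      (fun k => dstar (k * nt) nr ((k : ℝ) * r)) = dstar nt nr r := by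
  apply le_antisymm
  · have h1 : (1:ℕ) ∈ Finset.Icc 1 K := by simp [hK]
    have := Finset.inf'_le (fun k => dstar (k * nt) nr ((k : ℝ) * r)) h1
    simpa only [one_mul, Nat.cast_one] using this
  · apply Finset.le_inf'
    intro k hk
    simp only [Finset.mem_Icc] at hk
    exact key K nt nr k hk.1 hk.2 hnt hnr r hr0 hr1
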